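/- For 1 < p < 3, the hypergeometric function Υ(x) = ₂F₁(a_p, b_p, c_p; x), with a_p, b_p as above and c_p = p/(p-1), defined by the power series Σ_{k≥0} ((a_p)_k (b_p)_k / (c_p)_k) x^k/k!, satisfies Υ(x) > 0, Υ'(x) < 0, and Υ''(x) < 0 for all x ∈ (0,1). -/

import Mathlib

open Real Filter

/-- Pochhammer symbol `(a)_k`. -/
noncomputable def poch (a : ℝ) (k : ℕ) : ℝ := ∏ i ∈ Finset.range k, (a + i)

/-- The Gauss hypergeometric series `₂F₁(a,b,c;x)`. -/
noncomputable def hyp (a b c x : ℝ) : ℝ :=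
  ∑' k : ℕ, poch a k * poch b k / poch c k * x ^ k / (Nat.factorial k : ℝ)

noncomputable def ap (p : ℝ) : ℝ :=
  (3 - p + Real.sqrt (4 + 12 * (p - 1) - 3 * (p - 1) ^ 2)) / (4 * (p - 1))

noncomputable def bp (p : ℝ) : ℝ :=
  (3 - p - Real.sqrt (4 + 12 * (p - 1) - 3 * (p - 1) ^ 2)) / (4 * (p - 1))

noncomputable def cp (p : ℝ) : ℝ := p / (p - 1)

/-- `Υ(x) = ₂F₁(a_p, b_p, c_p; x)`. -/
noncomputable def Ups (p x : ℝ) : ℝ := hyp (ap p) (bp p) (cp p) x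

namespace AuxHyp

lemma poch_zero (a : ℝ) : poch a 0 = 1 := by simp [poch]

lemma poch_succ (a : ℝ) (k : ℕ) : poch a (k+1) = poch a k * (a + k) := by
  simp [poch, Finset.prod_range_succ]

lemma poch_succ' (a : ℝ) (k : ℕ) : poch a (k+1) = a * poch (a+1) k := by
  rw [poch, Finset.prod_range_succ']
  rw [mul_comm]
  congr 1
  · simp
  · unfold poch
    apply Finset.prod_congr rfl
    intro i _
    push_cast
    ring

lemma poch_pos {a : ℝ} (ha : 0 < a) (k : ℕ) : 0 < poch a k :=
  Finset.prod_pos fun i _ => add_pos_of_pos_of_nonneg ha (Nat.cast_nonneg i)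

noncomputable def term (a b c : ℝ) (k : ℕ) : ℝ :=
  poch a k * poch b k / (poch c k * (Nat.factorial k : ℝ))

lemma term_zero (a b c : ℝ) : term a b c 0 = 1 := by
  simp [term, poch_zero]

lemma term_pos {a b c : ℝ} (ha : 0 < a) (hb : 0 < b) (hc : 0 < c) (k : ℕ) :
    0 < term a b c k :=
  div_pos (mul_pos (poch_pos ha k) (poch_pos hb k))
    (mul_pos (poch_pos hc k) (by exact_mod_cast k.factorial_pos))

lemma term_succ {c : ℝ} (hc : 0 < c) (a b : ℝ) (k : ℕ) :
    term a b c (k+1) * ((c + k) * (k+1)) = term a b c k * ((a + k) * (b + k)) := by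
  have h1 : poch c k ≠ 0 := (poch_pos hc k).ne'
  have h2 : (c + (k:ℝ)) ≠ 0 := (add_pos_of_pos_of_nonneg hc (Nat.cast_nonneg k)).ne'
  have h3 : ((k.factorial : ℝ)) ≠ 0 := Nat.cast_ne_zero.2 k.factorial_ne_zero
  have h4 : ((k:ℝ) + 1) ≠ 0 := by positivity
  rw [term, term, poch_succ a, poch_succ b, poch_succ c, Nat.factorial_succ]
  push_cast
  field_simp

lemma term_shift {c : ℝ} (hc : 0 < c) (a b : ℝ) (k : ℕ) :
    ((k:ℝ)+1) * term a b c (k+1) = (a*b/c) * term (a+1) (b+1) (c+1) k := by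
  have h1 : poch (c+1) k ≠ 0 := (poch_pos (by linarith) k).ne'
  have hc' : c ≠ 0 := hc.ne'
  have h3 : ((k.factorial : ℝ)) ≠ 0 := Nat.cast_ne_zero.2 k.factorial_ne_zero
  have h4 : ((k:ℝ) + 1) ≠ 0 := by positivity
  rw [term, term, poch_succ' a, poch_succ' b, poch_succ' c, Nat.factorial_succ]
  push_cast
  field_simp

lemma summable_geom_aux (C : ℕ) {r : ℝ} (hr0 : 0 < r) (hr1 : r < 1) :
    Summable (fun k : ℕ => ((k:ℝ)+1)^C * r^k) := by
  have h1 : Summable (fun k : ℕ => (k:ℝ)^C * r^k) :=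
    summable_pow_mul_geometric_of_norm_lt_one C (by rwa [Real.norm_eq_abs, abs_of_pos hr0])
  have h2 : Summable (fun k : ℕ => ((k:ℝ)+1)^C * r^(k+1)) := by
    have := (summable_nat_add_iff (f := fun k : ℕ => (k:ℝ)^C * r^k) 1).2 h1
    refine this.congr fun k => ?_
    push_cast
    ring
  have h3 := h2.mul_left (1/r)
  refine h3.congr fun k => ?_
  field_simp
  ring

lemma summable_aux {x r : ℝ} (C : ℕ) (hr0 : 0 < r) (hr1 : r < 1) (hxr : |x| ≤ r)
    {u : ℕ → ℝ} {B : ℝ} (hu : ∀ k, |u k| ≤ B * ((k:ℝ)+1)^C) :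
    Summable (fun k => u k * x ^ k) := by
  have hB : 0 ≤ B := by have := (abs_nonneg (u 0)).trans (hu 0); simpa using this
  refine Summable.of_norm_bounded (g := fun k => B * ((k:ℝ)+1)^C * r^k)
    ((summable_geom_aux C hr0 hr1).mul_left B |>.congr fun k => by ring) fun k => ?_
  rw [Real.norm_eq_abs, abs_mul, abs_pow]
  have h1 : |x|^k ≤ r^k := pow_le_pow_left₀ (abs_nonneg x) hxr k
  have h2 : (0:ℝ) ≤ ((k:ℝ)+1)^C := by positivity
  calc |u k| * |x|^k ≤ (B * ((k:ℝ)+1)^C) * r^k := by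
        apply mul_le_mul (hu k) h1 (pow_nonneg (abs_nonneg x) k)
        positivity
    _ = B * ((k:ℝ)+1)^C * r^k := by ring

lemma hasDerivAt_aux {u : ℕ → ℝ} {B : ℝ} (C : ℕ) (hu : ∀ k, |u k| ≤ B * ((k:ℝ)+1)^C)
    {x : ℝ} (hx : |x| < 1) :
    HasDerivAt (fun y => ∑' k, u k * y ^ k) (∑' k : ℕ, ((k:ℝ)+1) * u (k+1) * x ^ k) x := by
  have hB : 0 ≤ B := by have := (abs_nonneg (u 0)).trans (hu 0); simpa using this
  set r : ℝ := (|x| + 1)/2 with hr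
  have hr0 : 0 < r := by positivity
  have hr1 : r < 1 := by rw [hr]; linarith
  have hxr : |x| < r := by rw [hr]; linarith [abs_nonneg x]
  -- the bound sequence
  set U : ℕ → ℝ := fun k => (B/r) * ((k:ℝ)+1)^(C+1) * r^k with hU
  have hUsum : Summable U := (summable_geom_aux (C+1) hr0 hr1).mul_left (B/r)
    |>.congr fun k => by rw [hU]; ring
  have hbound : ∀ (k : ℕ) (y : ℝ), y ∈ Set.Ioo (-r) r →
      ‖u k * ((k:ℝ) * y ^ (k-1))‖ ≤ U k := by
    intro k y hy
    have hyr : |y| ≤ r := by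
      rw [abs_le]; exact ⟨hy.1.le, hy.2.le⟩
    rw [Real.norm_eq_abs, abs_mul, abs_mul, abs_pow]
    match k with
    | 0 => simp [hU]; positivity
    | (j+1) =>
      simp only [Nat.add_sub_cancel]
      have h1 : |y|^j ≤ r^j := pow_le_pow_left₀ (abs_nonneg y) hyr j
      have h2 : |((j+1 : ℕ):ℝ)| = (j:ℝ)+1 := by
        rw [abs_of_nonneg] <;> push_cast <;> [skip; positivity]; ring
      rw [h2]
      have hRHS : U (j+1) = B * (((j:ℝ)+1)+1)^(C+1) * r^j := by
        rw [hU]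
        have : r^(j+1) = r * r^j := by ring
        push_cast
        field_simp
        ring
      rw [hRHS]
      have key : |u (j+1)| * ((j:ℝ)+1) * |y|^j ≤ (B * (((j:ℝ)+1)+1)^C) * ((((j:ℝ)+1)+1)) * r^j := by
        have hu' := hu (j+1)
        push_cast at hu'
        apply mul_le_mul _ h1 (pow_nonneg (abs_nonneg y) j) (by positivity)
        apply mul_le_mul hu' (by linarith) (by positivity) (by positivity)
      calc |u (j+1)| * (((j:ℝ)+1) * |y|^j) = |u (j+1)| * ((j:ℝ)+1) * |y|^j := by ring
        _ ≤ (B * (((j:ℝ)+1)+1)^C) * ((((j:ℝ)+1)+1)) * r^j := key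
        _ = B * (((j:ℝ)+1)+1)^(C+1) * r^j := by ring
  have hfd : ∀ (k : ℕ) (y : ℝ), y ∈ Set.Ioo (-r) r →
      HasDerivAt (fun z => u k * z ^ k) (u k * ((k:ℝ) * y ^ (k-1))) y := by
    intro k y _
    exact (hasDerivAt_pow k y).const_mul (u k)
  have h0mem : (0:ℝ) ∈ Set.Ioo (-r) r := by constructor <;> simp [hr0] <;> linarith
  have hxmem : x ∈ Set.Ioo (-r) r := by
    constructor
    · linarith [neg_abs_le x]
    · linarith [le_abs_self x]
  have hf0 : Summable (fun k => u k * (0:ℝ) ^ k) := by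
    apply summable_of_ne_finset_zero (s := {0})
    intro k hk
    have : k ≠ 0 := by simpa using hk
    simp [zero_pow this]
  have key := hasDerivAt_tsum_of_isPreconnected hUsum isOpen_Ioo
    (isPreconnected_Ioo) hfd hbound h0mem hf0 hxmem
  -- rewrite the derivative sum
  have hsum' : Summable (fun k => u k * ((k:ℝ) * x ^ (k-1))) := by
    apply Summable.of_norm_bounded (g := U) hUsum
    intro k; exact hbound k x hxmem
  have : (∑' k, u k * ((k:ℝ) * x ^ (k-1))) = ∑' k : ℕ, ((k:ℝ)+1) * u (k+1) * x ^ k := by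
    rw [Summable.tsum_eq_zero_add hsum']
    simp only [Nat.cast_zero, zero_mul, mul_zero, zero_add]
    apply tsum_congr
    intro k
    simp only [Nat.add_sub_cancel]
    push_cast
    ring
  rwa [this] at key

lemma term_succ_div {a b c : ℝ} (hc : 0 < c) {k : ℕ} : term a b c (k+1) =
    term a b c k * ((a + k) * (b + k)) / ((c + k) * (k+1)) := by
  have hpos : 0 < (c + (k:ℝ)) * ((k:ℝ)+1) := by
    have h0 : (0:ℝ) ≤ (k:ℝ) := Nat.cast_nonneg k
    have : 0 < c + (k:ℝ) := by linarith
    positivity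
  field_simp
  have := term_succ hc a b k
  push_cast at this ⊢
  linarith [this]

section Bounds
variable {a b c : ℝ} (ha : 1/2 < a) (hb1 : -1 < b) (hb2 : b < -1/2)
  (hc4 : c = a + b + 3/2) (hab : a * b = (5 - 4*c)/4)

include ha hb1 hb2 hc4 hab

lemma hc_pos : 0 < c := by linarith

lemma bound0 : ∀ k, |term a b c k| ≤ 1 := by
  intro k
  induction k with
  | zero => simp [term_zero]
  | succ k ih =>
    have hc : 0 < c := by linarith
    have hk0 : (0:ℝ) ≤ (k:ℝ) := Nat.cast_nonneg k
    have hpos : 0 < (c + (k:ℝ)) * ((k:ℝ)+1) := by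
      have : 0 < c + (k:ℝ) := by linarith
      positivity
    have hratio : |(a + (k:ℝ)) * (b + (k:ℝ))| ≤ (c + (k:ℝ)) * ((k:ℝ)+1) := by
      match k with
      | 0 =>
        have hneg : a * b < 0 := mul_neg_of_pos_of_neg (by linarith) (by linarith)
        rw [Nat.cast_zero, add_zero, add_zero, abs_of_neg hneg]
        nlinarith
      | (j+1) =>
        have hj : (1:ℝ) ≤ ((j:ℝ)+1) := by linarith [Nat.cast_nonneg (α := ℝ) j]
        push_cast
        rw [abs_of_nonneg (by nlinarith)]
        nlinarith
    rw [term_succ_div (by linarith : (0:ℝ) < c), abs_div, abs_mul, abs_of_pos hpos]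
    rw [div_le_one hpos]
    calc |term a b c k| * |(a + (k:ℝ)) * (b + (k:ℝ))|
        ≤ 1 * ((c + (k:ℝ)) * ((k:ℝ)+1)) :=
          mul_le_mul ih hratio (abs_nonneg _) zero_le_one
      _ = (c + (k:ℝ)) * ((k:ℝ)+1) := one_mul _

lemma bound1 : ∀ k, term (a+1) (b+1) (c+1) k ≤ 1 := by
  intro k
  induction k with
  | zero => simp [term_zero]
  | succ k ih =>
    have hk0 : (0:ℝ) ≤ (k:ℝ) := Nat.cast_nonneg k
    have hpos : 0 < (c + 1 + (k:ℝ)) * ((k:ℝ)+1) := by nlinarith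
    have htpos : 0 ≤ term (a+1) (b+1) (c+1) k :=
      (term_pos (by linarith) (by linarith) (by linarith) k).le
    rw [term_succ_div (a := a+1) (b := b+1) (c := c+1) (by linarith)]
    rw [div_le_one hpos]
    have hratio : (a + 1 + (k:ℝ)) * (b + 1 + (k:ℝ)) ≤ (c + 1 + (k:ℝ)) * ((k:ℝ)+1) := by
      nlinarith
    calc term (a+1) (b+1) (c+1) k * ((a + 1 + (k:ℝ)) * (b + 1 + (k:ℝ)))
        ≤ 1 * ((c + 1 + (k:ℝ)) * ((k:ℝ)+1)) := by
          apply mul_le_mul ih hratio (by nlinarith) zero_le_one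
      _ = _ := one_mul _

lemma bound2 : ∀ k, term (a+2) (b+2) (c+2) k ≤ 2 := by
  have hstep : ∀ j : ℕ, term (a+2) (b+2) (c+2) (j+1+1) ≤ term (a+2) (b+2) (c+2) (j+1) := by
    intro j
    have hk0 : (0:ℝ) ≤ (j:ℝ) := Nat.cast_nonneg j
    set k : ℕ := j+1
    have hkc : (k:ℝ) = (j:ℝ) + 1 := by rw [show k = j+1 from rfl]; push_cast; ring
    have hpos : 0 < (c + 2 + (k:ℝ)) * ((k:ℝ)+1) := by rw [hkc]; nlinarith
    have htpos : 0 ≤ term (a+2) (b+2) (c+2) k :=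
      (term_pos (by linarith) (by linarith) (by linarith) k).le
    rw [term_succ_div (a := a+2) (b := b+2) (c := c+2) (by linarith)]
    rw [div_le_iff₀ hpos]
    have hratio : (a + 2 + (k:ℝ)) * (b + 2 + (k:ℝ)) ≤ (c + 2 + (k:ℝ)) * ((k:ℝ)+1) := by
      rw [hkc]; nlinarith
    calc term (a+2) (b+2) (c+2) k * ((a + 2 + (k:ℝ)) * (b + 2 + (k:ℝ)))
        ≤ term (a+2) (b+2) (c+2) k * ((c + 2 + (k:ℝ)) * ((k:ℝ)+1)) := by
          apply mul_le_mul_of_nonneg_left hratio htpos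
      _ = _ := by ring
  have h1 : term (a+2) (b+2) (c+2) 1 ≤ 2 := by
    have h := term_succ_div (a := a+2) (b := b+2) (c := c+2) (k := 0) (by linarith)
    rw [h, term_zero]
    rw [Nat.cast_zero]
    have hpos : 0 < (c + 2 + (0:ℝ)) * ((0:ℝ)+1) := by nlinarith
    rw [div_le_iff₀ hpos]
    nlinarith
  have hdec : ∀ j : ℕ, term (a+2) (b+2) (c+2) (j+1) ≤ 2 := by
    intro j
    induction j with
    | zero => exact h1
    | succ j ih => exact le_trans (hstep j) ih
  intro k
  match k with
  | 0 => rw [term_zero]; norm_num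
  | (j+1) => exact hdec j

end Bounds
section PFacts
variable {p : ℝ} (hp1 : 1 < p) (hp3 : p < 3)
include hp1 hp3

lemma hD_pos : 0 < 4 + 12 * (p - 1) - 3 * (p - 1) ^ 2 := by nlinarith

lemma hs_sq : Real.sqrt (4 + 12 * (p - 1) - 3 * (p - 1) ^ 2) ^ 2
    = 4 + 12 * (p - 1) - 3 * (p - 1) ^ 2 :=
  Real.sq_sqrt (hD_pos hp1 hp3).le

lemma hs_pos : 0 < Real.sqrt (4 + 12 * (p - 1) - 3 * (p - 1) ^ 2) :=
  Real.sqrt_pos.2 (hD_pos hp1 hp3)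

lemma fact1 : 1/2 < ap p := by
  have hs2 := hs_sq hp1 hp3
  have hs0 := hs_pos hp1 hp3
  set s := Real.sqrt (4 + 12 * (p - 1) - 3 * (p - 1) ^ 2)
  rw [ap, lt_div_iff₀ (by linarith : (0:ℝ) < 4 * (p - 1))]
  nlinarith [sq_nonneg (s - (3*p - 5)), sq_nonneg (s + (3*p - 5))]

lemma fact2 : -1 < bp p := by
  have hs2 := hs_sq hp1 hp3
  have hs0 := hs_pos hp1 hp3
  set s := Real.sqrt (4 + 12 * (p - 1) - 3 * (p - 1) ^ 2)
  rw [bp, lt_div_iff₀ (by linarith : (0:ℝ) < 4 * (p - 1))]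
  nlinarith [sq_nonneg (s - (3*p - 1)), sq_nonneg (s + (3*p - 1))]

lemma fact3 : bp p < -1/2 := by
  have hs2 := hs_sq hp1 hp3
  have hs0 := hs_pos hp1 hp3
  set s := Real.sqrt (4 + 12 * (p - 1) - 3 * (p - 1) ^ 2)
  rw [bp, div_lt_iff₀ (by linarith : (0:ℝ) < 4 * (p - 1))]
  nlinarith [sq_nonneg (s - (p + 1)), sq_nonneg (s + (p + 1))]

lemma fact4 : cp p = ap p + bp p + 3/2 := by
  have hne : p - 1 ≠ 0 := by linarith
  rw [cp, ap, bp]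
  field_simp
  ring

lemma fact5 : ap p * bp p = (5 - 4 * cp p)/4 := by
  have hne : p - 1 ≠ 0 := by linarith
  have hs2 := hs_sq hp1 hp3
  set s := Real.sqrt (4 + 12 * (p - 1) - 3 * (p - 1) ^ 2) with hs
  rw [cp, ap, bp, div_mul_div_comm]
  have h1 : (3 - p + s) * (3 - p - s) = (3 - p)^2 - (4 + 12 * (p - 1) - 3 * (p - 1) ^ 2) := by
    rw [← hs2]; ring
  rw [h1]
  field_simp
  ring

end PFacts

noncomputable def FF (a b c x : ℝ) : ℝ := ∑' k : ℕ, term a b c k * x ^ k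

lemma tsum_shift {f : ℕ → ℝ} (hf : Summable f) (h0 : f 0 = 0) :
    ∑' k, f k = ∑' k : ℕ, f (k+1) := by
  rw [Summable.tsum_eq_zero_add hf, h0, zero_add]

set_option maxHeartbeats 1000000 in
theorem abstract_main {a b c : ℝ} (ha : 1/2 < a) (hb1 : -1 < b) (hb2 : b < -1/2)
    (hc4 : c = a + b + 3/2) (hab : a * b = (5 - 4*c)/4) :
    ∀ x ∈ Set.Ioo (0:ℝ) 1,
      0 < FF a b c x ∧ deriv (FF a b c) x < 0 ∧ deriv (deriv (FF a b c)) x < 0 := by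
  have hc : 0 < c := by linarith
  have hc1 : 0 < c + 1 := by linarith
  have ha0 : 0 < a := by linarith
  have hb0 : b < 0 := by linarith
  have habneg : a * b < 0 := mul_neg_of_pos_of_neg ha0 hb0
  have habc : a * b / c < 0 := div_neg_of_neg_of_pos habneg hc
  set T : ℕ → ℝ := term a b c with hT
  set T1 : ℕ → ℝ := term (a+1) (b+1) (c+1) with hT1
  set T2 : ℕ → ℝ := term (a+2) (b+2) (c+2) with hT2
  -- coefficient bounds
  have hb0' := bound0 ha hb1 hb2 hc4 hab
  have hb1' := bound1 ha hb1 hb2 hc4 hab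
  have hb2' := bound2 ha hb1 hb2 hc4 hab
  have hT1pos : ∀ k, 0 < T1 k := fun k => term_pos (by linarith) (by linarith) (by linarith) k
  have hT2pos : ∀ k, 0 < T2 k := fun k => term_pos (by linarith) (by linarith) (by linarith) k
  have hT0 : ∀ k : ℕ, |T k| ≤ 1 * ((k:ℝ)+1)^(0:ℕ) := fun k => by
    simpa using hb0' k
  have hu1 : ∀ k : ℕ, |((k:ℝ)+1) * T (k+1)| ≤ 1 * ((k:ℝ)+1)^(1:ℕ) := by
    intro k
    have hk : (0:ℝ) ≤ (k:ℝ)+1 := by positivity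
    rw [abs_mul, abs_of_nonneg hk]
    calc ((k:ℝ)+1) * |T (k+1)| ≤ ((k:ℝ)+1) * 1 :=
          mul_le_mul_of_nonneg_left (hb0' (k+1)) hk
      _ = 1 * ((k:ℝ)+1)^(1:ℕ) := by ring
  have hu2 : ∀ k : ℕ, |((k:ℝ)+2)*((k:ℝ)+1) * T (k+2)| ≤ 2 * ((k:ℝ)+1)^(2:ℕ) := by
    intro k
    have hk : (0:ℝ) ≤ ((k:ℝ)+2)*((k:ℝ)+1) := by positivity
    rw [abs_mul, abs_of_nonneg hk]
    have hkk : (0:ℝ) ≤ (k:ℝ) := Nat.cast_nonneg k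
    calc ((k:ℝ)+2)*((k:ℝ)+1) * |T (k+2)| ≤ ((k:ℝ)+2)*((k:ℝ)+1) * 1 :=
          mul_le_mul_of_nonneg_left (hb0' (k+2)) hk
      _ ≤ 2 * ((k:ℝ)+1)^(2:ℕ) := by nlinarith
  have huA : ∀ k : ℕ, |((k:ℝ)+1)*(k:ℝ) * T (k+1)| ≤ 1 * ((k:ℝ)+1)^(2:ℕ) := by
    intro k
    have hkk : (0:ℝ) ≤ (k:ℝ) := Nat.cast_nonneg k
    have hk : (0:ℝ) ≤ ((k:ℝ)+1)*(k:ℝ) := by positivity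
    rw [abs_mul, abs_of_nonneg hk]
    calc ((k:ℝ)+1)*(k:ℝ) * |T (k+1)| ≤ ((k:ℝ)+1)*(k:ℝ) * 1 :=
          mul_le_mul_of_nonneg_left (hb0' (k+1)) hk
      _ ≤ 1 * ((k:ℝ)+1)^(2:ℕ) := by nlinarith
  have huX : ∀ k : ℕ, |(k:ℝ) * T k| ≤ 1 * ((k:ℝ)+1)^(1:ℕ) := by
    intro k
    have hkk : (0:ℝ) ≤ (k:ℝ) := Nat.cast_nonneg k
    rw [abs_mul, abs_of_nonneg hkk]
    calc (k:ℝ) * |T k| ≤ (k:ℝ) * 1 := mul_le_mul_of_nonneg_left (hb0' k) hkk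
      _ ≤ 1 * ((k:ℝ)+1)^(1:ℕ) := by nlinarith
  have huB : ∀ k : ℕ, |(k:ℝ)*((k:ℝ)-1) * T k| ≤ 1 * ((k:ℝ)+1)^(2:ℕ) := by
    intro k
    have hkk : (0:ℝ) ≤ (k:ℝ) := Nat.cast_nonneg k
    have hk : (0:ℝ) ≤ (k:ℝ)*((k:ℝ)-1) := by
      rcases Nat.eq_zero_or_pos k with h | h
      · simp [h]
      · have : (1:ℝ) ≤ (k:ℝ) := by exact_mod_cast h
        nlinarith
    rw [abs_mul, abs_of_nonneg hk]
    calc (k:ℝ)*((k:ℝ)-1) * |T k| ≤ (k:ℝ)*((k:ℝ)-1) * 1 :=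
          mul_le_mul_of_nonneg_left (hb0' k) hk
      _ ≤ 1 * ((k:ℝ)+1)^(2:ℕ) := by nlinarith
  have huP : ∀ k : ℕ, |((k:ℝ)+1)*(c+(k:ℝ)) * T (k+1)| ≤ (c+1) * ((k:ℝ)+1)^(2:ℕ) := by
    intro k
    have hkk : (0:ℝ) ≤ (k:ℝ) := Nat.cast_nonneg k
    have hk : (0:ℝ) ≤ ((k:ℝ)+1)*(c+(k:ℝ)) := by positivity
    rw [abs_mul, abs_of_nonneg hk]
    calc ((k:ℝ)+1)*(c+(k:ℝ)) * |T (k+1)| ≤ ((k:ℝ)+1)*(c+(k:ℝ)) * 1 :=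
          mul_le_mul_of_nonneg_left (hb0' (k+1)) hk
      _ ≤ (c+1) * ((k:ℝ)+1)^(2:ℕ) := by
          nlinarith [mul_nonneg (mul_nonneg hc.le hkk) hkk, mul_nonneg hc.le hkk]
  have huT1 : ∀ k : ℕ, |T1 k| ≤ 1 * ((k:ℝ)+1)^(0:ℕ) := fun k => by
    rw [abs_of_pos (hT1pos k)]; simpa using hb1' k
  have huT2 : ∀ k : ℕ, |T2 k| ≤ 2 * ((k:ℝ)+1)^(0:ℕ) := fun k => by
    rw [abs_of_pos (hT2pos k)]; simpa using hb2' k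
  -- derivative formulas
  set g1 : ℝ → ℝ := fun x => ∑' k : ℕ, ((k:ℝ)+1) * T (k+1) * x^k with hg1
  set g2 : ℝ → ℝ := fun x => ∑' k : ℕ, ((k:ℝ)+2) * ((k:ℝ)+1) * T (k+2) * x^k with hg2
  have hF' : ∀ x : ℝ, |x| < 1 → HasDerivAt (FF a b c) (g1 x) x := by
    intro x hx
    exact hasDerivAt_aux 0 hT0 hx
  have hG1' : ∀ x : ℝ, |x| < 1 → HasDerivAt g1 (g2 x) x := by
    intro x hx
    have h := hasDerivAt_aux (u := fun k => ((k:ℝ)+1) * T (k+1)) 1 hu1 hx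
    have e : (∑' k : ℕ, ((k:ℝ)+1) * ((((k+1:ℕ):ℝ)+1) * T (k+1+1)) * x^k) = g2 x := by
      rw [hg2]
      apply tsum_congr
      intro k
      push_cast
      ring
    rw [← e]
    exact h
  rintro x ⟨hx0, hx1⟩
  have hxabs : |x| < 1 := abs_lt.2 ⟨by linarith, hx1⟩
  have hxnn : 0 ≤ x := hx0.le
  set r : ℝ := (|x| + 1)/2 with hr
  have hr0 : 0 < r := by positivity
  have hrr1 : r < 1 := by rw [hr]; linarith
  have hxr : |x| ≤ r := by rw [hr]; linarith
  -- summabilities at x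
  have S0 : Summable (fun k : ℕ => T k * x^k) := summable_aux 0 hr0 hrr1 hxr hT0
  have S1 : Summable (fun k : ℕ => ((k:ℝ)+1) * T (k+1) * x^k) :=
    summable_aux 1 hr0 hrr1 hxr hu1
  have S2 : Summable (fun k : ℕ => ((k:ℝ)+2)*((k:ℝ)+1) * T (k+2) * x^k) :=
    summable_aux 2 hr0 hrr1 hxr hu2
  have SA : Summable (fun k : ℕ => ((k:ℝ)+1)*(k:ℝ) * T (k+1) * x^k) :=
    summable_aux 2 hr0 hrr1 hxr huA
  have SX : Summable (fun k : ℕ => (k:ℝ) * T k * x^k) :=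
    summable_aux 1 hr0 hrr1 hxr huX
  have SB : Summable (fun k : ℕ => (k:ℝ)*((k:ℝ)-1) * T k * x^k) :=
    summable_aux 2 hr0 hrr1 hxr huB
  have ST1 : Summable (fun k : ℕ => T1 k * x^k) := summable_aux 0 hr0 hrr1 hxr huT1
  have ST2 : Summable (fun k : ℕ => T2 k * x^k) := summable_aux 0 hr0 hrr1 hxr huT2
  -- positivity of shifted sums
  have hH1 : 1 ≤ ∑' k : ℕ, T1 k * x^k := by
    rw [Summable.tsum_eq_zero_add ST1]
    have h0 : T1 0 * x^0 = 1 := by rw [hT1, term_zero]; simp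
    rw [h0]
    have : 0 ≤ ∑' k : ℕ, T1 (k+1) * x^(k+1) :=
      tsum_nonneg fun k => mul_nonneg (hT1pos (k+1)).le (pow_nonneg hxnn _)
    linarith
  have hH2 : 1 ≤ ∑' k : ℕ, T2 k * x^k := by
    rw [Summable.tsum_eq_zero_add ST2]
    have h0 : T2 0 * x^0 = 1 := by rw [hT2, term_zero]; simp
    rw [h0]
    have : 0 ≤ ∑' k : ℕ, T2 (k+1) * x^(k+1) :=
      tsum_nonneg fun k => mul_nonneg (hT2pos (k+1)).le (pow_nonneg hxnn _)
    linarith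
  -- g1 x < 0
  have hg1eq : g1 x = (a*b/c) * ∑' k : ℕ, T1 k * x^k := by
    rw [hg1, ← tsum_mul_left]
    apply tsum_congr
    intro k
    rw [hT, ← mul_assoc, ← term_shift hc a b k]
  have hg1neg : g1 x < 0 := by
    rw [hg1eq]
    exact mul_neg_of_neg_of_pos habc (by linarith)
  -- g2 x < 0
  have hg2eq : g2 x = ((a*b/c) * ((a+1)*(b+1)/(c+1))) * ∑' k : ℕ, T2 k * x^k := by
    rw [hg2, ← tsum_mul_left]
    apply tsum_congr
    intro k
    have e1 := term_shift hc a b (k+1)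
    have e2 := term_shift hc1 (a+1) (b+1) k
    simp only [show a+1+1 = a+2 from by ring, show b+1+1 = b+2 from by ring,
      show c+1+1 = c+2 from by ring] at e2
    push_cast at e1
    rw [hT, hT2]
    linear_combination (((k:ℝ)+1) * x^k) * e1 + ((a*b/c) * x^k) * e2
  have hfac2 : (a*b/c) * ((a+1)*(b+1)/(c+1)) < 0 :=
    mul_neg_of_neg_of_pos habc (div_pos (mul_pos (by linarith) (by linarith)) hc1)
  have hg2neg : g2 x < 0 := by
    rw [hg2eq]
    exact mul_neg_of_neg_of_pos hfac2 (by linarith)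
  -- derivative values
  have hd1 : deriv (FF a b c) x = g1 x := (hF' x hxabs).deriv
  have hev : deriv (FF a b c) =ᶠ[nhds x] g1 := by
    filter_upwards [isOpen_Ioo.mem_nhds (show x ∈ Set.Ioo (-1:ℝ) 1 from ⟨by linarith, hx1⟩)]
      with y hy
    exact (hF' y (abs_lt.2 ⟨by linarith [hy.1], hy.2⟩)).deriv
  have hd2 : deriv (deriv (FF a b c)) x = g2 x := by
    rw [hev.deriv_eq]
    exact (hG1' x hxabs).deriv
  -- the ODE
  have hA : (∑' k : ℕ, ((k:ℝ)+1)*(k:ℝ) * T (k+1) * x^k) = x * g2 x := by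
    rw [tsum_shift SA (by norm_num)]
    rw [hg2, ← tsum_mul_left]
    apply tsum_congr
    intro k
    push_cast
    ring
  have hX : (∑' k : ℕ, (k:ℝ) * T k * x^k) = x * g1 x := by
    rw [tsum_shift SX (by norm_num)]
    rw [hg1, ← tsum_mul_left]
    apply tsum_congr
    intro k
    push_cast
    ring
  have hB : (∑' k : ℕ, (k:ℝ)*((k:ℝ)-1) * T k * x^k)
      = x * ∑' k : ℕ, ((k:ℝ)+1)*(k:ℝ) * T (k+1) * x^k := by
    rw [tsum_shift SB (by norm_num)]
    rw [← tsum_mul_left]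
    apply tsum_congr
    intro k
    push_cast
    ring
  have hPQ : (∑' k : ℕ, ((k:ℝ)+1)*(c+(k:ℝ)) * T (k+1) * x^k)
      = ∑' k : ℕ, (a+(k:ℝ))*(b+(k:ℝ)) * T k * x^k := by
    apply tsum_congr
    intro k
    have e := term_succ hc a b k
    rw [hT]
    linear_combination (x^k) * e
  have hP : (∑' k : ℕ, ((k:ℝ)+1)*(c+(k:ℝ)) * T (k+1) * x^k)
      = (∑' k : ℕ, ((k:ℝ)+1)*(k:ℝ) * T (k+1) * x^k) + c * g1 x := by
    have e : (fun k : ℕ => ((k:ℝ)+1)*(c+(k:ℝ)) * T (k+1) * x^k)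
        = fun k : ℕ => (((k:ℝ)+1)*(k:ℝ) * T (k+1) * x^k) + c * (((k:ℝ)+1) * T (k+1) * x^k) := by
      funext k; ring
    rw [e, Summable.tsum_add SA (S1.mul_left c), tsum_mul_left]
  have hQ : (∑' k : ℕ, (a+(k:ℝ))*(b+(k:ℝ)) * T k * x^k)
      = (∑' k : ℕ, (k:ℝ)*((k:ℝ)-1) * T k * x^k)
        + ((a+b+1) * (∑' k : ℕ, (k:ℝ) * T k * x^k) + (a*b) * FF a b c x) := by
    have e : (fun k : ℕ => (a+(k:ℝ))*(b+(k:ℝ)) * T k * x^k)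
        = fun k : ℕ => ((k:ℝ)*((k:ℝ)-1) * T k * x^k)
          + ((a+b+1) * ((k:ℝ) * T k * x^k) + (a*b) * (T k * x^k)) := by
      funext k; ring
    have hFF : FF a b c x = ∑' k : ℕ, T k * x^k := by rw [hT]; rfl
    rw [e, Summable.tsum_add SB ((SX.mul_left (a+b+1)).add (S0.mul_left (a*b))),
      Summable.tsum_add (SX.mul_left (a+b+1)) (S0.mul_left (a*b)), tsum_mul_left, tsum_mul_left, hFF]
  have hkey : a * b * FF a b c x = x*(1-x) * g2 x + (c - (a+b+1)*x) * g1 x := by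
    have e := hPQ
    rw [hP, hQ, hA, hX, hB, hA] at e
    linear_combination -e
  -- conclusion
  have hcoef : 0 < c - (a+b+1)*x := by
    have hab1 : a+b+1 = c - 1/2 := by linarith
    have he : c - (a+b+1)*x = c*(1-x) + x/2 := by rw [hab1]; ring
    have hcx : 0 < c*(1-x) := mul_pos hc (by linarith)
    linarith
  have hrhs : x*(1-x) * g2 x + (c - (a+b+1)*x) * g1 x < 0 := by
    have h1 : x*(1-x) * g2 x < 0 :=
      mul_neg_of_pos_of_neg (mul_pos hx0 (by linarith)) hg2neg
    have h2 : (c - (a+b+1)*x) * g1 x < 0 := mul_neg_of_pos_of_neg hcoef hg1neg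
    linarith
  have hFpos : 0 < FF a b c x := by
    by_contra h
    push_neg at h
    have h2 : 0 ≤ a * b * FF a b c x := by
      nlinarith [mul_nonneg (neg_nonneg.2 habneg.le) (neg_nonneg.2 h)]
    linarith [hkey, hrhs, h2]
  exact ⟨hFpos, by rw [hd1]; exact hg1neg, by rw [hd2]; exact hg2neg⟩

end AuxHyp

lemma Ups_eq_FF (p : ℝ) : Ups p = AuxHyp.FF (ap p) (bp p) (cp p) := by
  funext x
  apply tsum_congr
  intro k
  rw [AuxHyp.term, div_eq_mul_inv, div_eq_mul_inv, div_eq_mul_inv, mul_inv]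
  ring

/-- `Υ > 0`, `Υ' < 0` and `Υ'' < 0` on `(0,1)`. -/
theorem stmt_6 (p : ℝ) (hp1 : 1 < p) (hp3 : p < 3) :
    ∀ x ∈ Set.Ioo (0 : ℝ) 1,
      0 < Ups p x ∧ deriv (Ups p) x < 0 ∧ deriv (deriv (Ups p)) x < 0 := by
  rw [Ups_eq_FF p]
  exact AuxHyp.abstract_main (AuxHyp.fact1 hp1 hp3) (AuxHyp.fact2 hp1 hp3)
    (AuxHyp.fact3 hp1 hp3) (AuxHyp.fact4 hp1 hp3) (AuxHyp.fact5 hp1 hp3)
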